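/- If the system (★) holds and l ≥ 2 (so that all u_k are nonzero), then Σ_{k=1}^{l} (n − m_k)·m_k·u_k = 0 and Σ_{k=1}^{l} (n − m_k)·m_k/u_k = 0. -/

import Mathlib

open Finset

/-- Sum over ordered distinct pairs of an antisymmetric function vanishes. -/
lemma sum_antisym_aux {l : ℕ} (g : Fin l → Fin l → ℝ)
    (h : ∀ k j, g k j = - g j k) :
    ∑ k, ∑ j ∈ univ.erase k, g k j = 0 := by
  have hc : ∑ k, ∑ j ∈ univ.erase k, g k j
      = ∑ j, ∑ k ∈ univ.erase j, g k j := by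
    apply Finset.sum_comm'
    intro x y
    simp [ne_comm]
  have hneg : ∑ j : Fin l, ∑ k ∈ univ.erase j, g k j
      = - ∑ j : Fin l, ∑ k ∈ univ.erase j, g j k := by
    calc ∑ j : Fin l, ∑ k ∈ univ.erase j, g k j
        = ∑ j : Fin l, ∑ k ∈ univ.erase j, -(g j k) :=
          Finset.sum_congr rfl fun j _ => Finset.sum_congr rfl fun k _ => h k j
      _ = - ∑ j : Fin l, ∑ k ∈ univ.erase j, g j k := by simp
  have h2 := hc.trans hneg
  linarith

/-- If the system (★) `n - m_k = 2 u_k Σ_{j≠k} m_j/(u_k - u_j)` holds for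
pairwise distinct reals `u_1, …, u_l` with positive multiplicities `m_k`
summing to `n`, and `l ≥ 2`, then `Σ_k (n - m_k) m_k u_k = 0` and
`Σ_k (n - m_k) m_k / u_k = 0`. -/
theorem star_system_sum_relations
    (n l : ℕ) (hn : 0 < n) (hl : 2 ≤ l)
    (m : Fin l → ℕ) (hm : ∀ k, 0 < m k) (hsum : ∑ k, m k = n)
    (u : Fin l → ℝ) (hu : Function.Injective u)
    (hstar : ∀ k, (n : ℝ) - (m k : ℝ) =
      2 * u k * ∑ j ∈ univ.erase k, (m j : ℝ) / (u k - u j)) :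
    (∑ k, ((n : ℝ) - (m k : ℝ)) * (m k : ℝ) * u k = 0) ∧
    (∑ k, ((n : ℝ) - (m k : ℝ)) * (m k : ℝ) / u k = 0) := by
  haveI : Nontrivial (Fin l) := Fin.nontrivial_iff_two_le.mpr hl
  have hml : ∀ k : Fin l, m k < n := by
    intro k
    obtain ⟨k', hk'⟩ := exists_ne k
    rw [← hsum]
    exact Finset.single_lt_sum hk' (mem_univ k) (mem_univ k') (hm k')
      (fun i _ _ => Nat.zero_le _)
  have hsub : ∀ k : Fin l, (∑ j ∈ univ.erase k, (m j : ℝ)) = (n : ℝ) - (m k : ℝ) := by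
    intro k
    rw [eq_sub_iff_add_eq, Finset.sum_erase_add _ _ (mem_univ k)]
    exact_mod_cast congrArg (Nat.cast : ℕ → ℝ) hsum
  have hu0 : ∀ k, u k ≠ 0 := by
    intro k hk
    have h1 := hstar k
    rw [hk] at h1
    simp at h1
    have h2 : (m k : ℝ) < (n : ℝ) := by exact_mod_cast hml k
    linarith
  have hd : ∀ k j : Fin l, j ≠ k → u k - u j ≠ 0 := by
    intro k j hjk
    exact sub_ne_zero.mpr (fun h => hjk (hu h.symm))
  constructor
  · -- first relation
    have hz : ∑ k, ∑ j ∈ univ.erase k,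
        2 * (m k : ℝ) * (m j : ℝ) * (u k * u j) / (u k - u j) = 0 := by
      apply sum_antisym_aux
      intro k j
      by_cases h : k = j
      · subst h; simp
      · have h1 : u k - u j ≠ 0 := hd k j (Ne.symm h)
        have h2 : u j - u k ≠ 0 := hd j k h
        field_simp
        ring
    have hterm : ∑ k, ∑ j ∈ univ.erase k, 2 * (m k : ℝ) * (m j : ℝ) * u k
        = 2 * ∑ k, ((n : ℝ) - (m k : ℝ)) * (m k : ℝ) * u k := by
      rw [Finset.mul_sum]
      apply Finset.sum_congr rfl
      intro k _
      have h3 : ∑ j ∈ univ.erase k, 2 * (m k : ℝ) * (m j : ℝ) * u k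
          = 2 * (m k : ℝ) * u k * ∑ j ∈ univ.erase k, (m j : ℝ) := by
        rw [Finset.mul_sum]
        exact Finset.sum_congr rfl fun j _ => by ring
      rw [h3, hsub k]
      ring
    have key : ∑ k, ((n : ℝ) - (m k : ℝ)) * (m k : ℝ) * u k
        = 2 * ∑ k, ((n : ℝ) - (m k : ℝ)) * (m k : ℝ) * u k := by
      calc ∑ k, ((n : ℝ) - (m k : ℝ)) * (m k : ℝ) * u k
          = ∑ k, ∑ j ∈ univ.erase k,
            (2 * (m k : ℝ) * (m j : ℝ) * (u k * u j) / (u k - u j)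
              + 2 * (m k : ℝ) * (m j : ℝ) * u k) := by
            apply Finset.sum_congr rfl
            intro k _
            rw [hstar k, Finset.mul_sum, Finset.sum_mul, Finset.sum_mul]
            apply Finset.sum_congr rfl
            intro j hj
            have hjk : u k - u j ≠ 0 := hd k j (Finset.mem_erase.mp hj).1
            field_simp
            ring
        _ = (∑ k, ∑ j ∈ univ.erase k,
              2 * (m k : ℝ) * (m j : ℝ) * (u k * u j) / (u k - u j))
            + ∑ k, ∑ j ∈ univ.erase k, 2 * (m k : ℝ) * (m j : ℝ) * u k := by
            rw [← Finset.sum_add_distrib]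
            exact Finset.sum_congr rfl fun k _ => Finset.sum_add_distrib
        _ = 2 * ∑ k, ((n : ℝ) - (m k : ℝ)) * (m k : ℝ) * u k := by
            rw [hz, hterm, zero_add]
    linarith
  · -- second relation
    have step : ∑ k, ((n : ℝ) - (m k : ℝ)) * (m k : ℝ) / u k
        = ∑ k, ∑ j ∈ univ.erase k, 2 * (m k : ℝ) * (m j : ℝ) / (u k - u j) := by
      apply Finset.sum_congr rfl
      intro k _
      rw [hstar k, Finset.mul_sum, Finset.sum_mul, Finset.sum_div]
      apply Finset.sum_congr rfl
      intro j hj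
      have hjk : u k - u j ≠ 0 := hd k j (Finset.mem_erase.mp hj).1
      have huk := hu0 k
      field_simp
    rw [step]
    apply sum_antisym_aux
    intro k j
    by_cases h : k = j
    · subst h; simp
    · have h1 : u k - u j ≠ 0 := hd k j (Ne.symm h)
      have h2 : u j - u k ≠ 0 := hd j k h
      field_simp
      ring
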